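/- Smooth approximation relative to a closed set: Let E, F be real normed vector spaces with E finite-dimensional, n ∈ ℕ ∪ {∞}, C ⊆ E closed, ε : E → ℝ continuous and positive, and f : E → F continuous and of class C^n on a neighbourhood of C. Then there exists a C^n function f' : E → F that coincides with f on C and satisfies ‖f'(x) − f(x)‖ ≤ ε(x) for all x. -/

import Mathlib

/-- Smooth approximation relative to a closed set: a continuous function which is `C^n`
near a closed set `C` can be approximated within a continuous positive error `ε` by a
global `C^n` function agreeing with it on `C`. -/
theorem exists_contDiff_approx {E F : Type*} [NormedAddCommGroup E] [NormedSpace ℝ E]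
    [FiniteDimensional ℝ E] [NormedAddCommGroup F] [NormedSpace ℝ F]
    (n : ℕ∞) {C : Set E} (hC : IsClosed C) {ε : E → ℝ}
    (hε : Continuous ε) (hε' : ∀ x, 0 < ε x) {f : E → F} (hf : Continuous f)
    (hfC : ∃ U : Set E, IsOpen U ∧ C ⊆ U ∧ ContDiffOn ℝ n f U) :
    ∃ f' : E → F, ContDiff ℝ n f' ∧ (∀ x ∈ C, f' x = f x) ∧
      ∀ x, ‖f' x - f x‖ ≤ ε x := by
  classical
  obtain ⟨U, hU, hCU, hfU⟩ := hfC
  set t : E → Set F := fun x =>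
    (if x ∈ C then {f x} else Set.univ) ∩ Metric.closedBall (f x) (ε x) with ht_def
  have ht : ∀ x, Convex ℝ (t x) := by
    intro x
    refine Convex.inter ?_ (convex_closedBall _ _)
    split
    · exact convex_singleton _
    · exact convex_univ
  have Hloc : ∀ x : E, ∃ V ∈ nhds x, ∃ g : E → F,
      ContMDiffOn (modelWithCornersSelf ℝ E) (modelWithCornersSelf ℝ F) n g V ∧
      ∀ y ∈ V, g y ∈ t y := by
    intro x
    by_cases hx : x ∈ U
    · refine ⟨U, hU.mem_nhds hx, f, ?_, ?_⟩
      · exact (contMDiffOn_iff_contDiffOn).2 hfU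
      · intro y _
        refine ⟨?_, by simp [Metric.mem_closedBall, (hε' y).le]⟩
        split <;> simp
    · have hxC : x ∉ C := fun h => hx (hCU h)
      set V : Set E := Cᶜ ∩ {y | ‖f x - f y‖ < ε y} with hV_def
      have hVopen : IsOpen V :=
        hC.isOpen_compl.inter (isOpen_lt (by continuity) hε)
      have hxV : x ∈ V := ⟨hxC, by simp [hε' x]⟩
      refine ⟨V, hVopen.mem_nhds hxV, fun _ => f x, contMDiffOn_const, ?_⟩
      rintro y ⟨hyC, hy⟩
      refine ⟨by simp only [Set.mem_ite_univ_right]; exact fun h => absurd h hyC, ?_⟩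
      simp only [Metric.mem_closedBall, dist_eq_norm]
      exact hy.le
  obtain ⟨g, hg⟩ := exists_contMDiffMap_forall_mem_convex_of_local
    (modelWithCornersSelf ℝ E) ht Hloc
  refine ⟨g, ?_, ?_, ?_⟩
  · exact (contMDiff_iff_contDiff).1 g.contMDiff
  · intro x hx
    have := (hg x).1
    simpa [hx] using this
  · intro x
    have := (hg x).2
    simpa [Metric.mem_closedBall, dist_eq_norm] using this
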